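/- For every positive integer d, ℛ(2^d - 1) = 𝒫([d]) \ {[d]} and β(2^d - 2) = (2^{d+1} - 2)/(d+1), where β(m) = ∑_{F ∈ ℛ(m+1)} 1/(|F|+1) and ℛ(ℓ) denotes the initial segment of length ℓ of finite subsets of ℕ under the colex order. -/

import Mathlib

/-- The colex value of a finite set of naturals. -/
def colexVal (A : Finset ℕ) : ℕ := ∑ i ∈ A, 2 ^ i

lemma colexVal_range (d : ℕ) : colexVal (Finset.range d) = 2 ^ d - 1 := by
  induction d with
  | zero => simp [colexVal]
  | succ n ih =>
    have h1 : (1:ℕ) ≤ 2 ^ n := Nat.one_le_two_pow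
    simp only [colexVal, Finset.sum_range_succ] at *
    rw [ih, pow_succ]
    omega

lemma mem_iff (d : ℕ) (A : Finset ℕ) :
    colexVal A < 2 ^ d - 1 ↔ A ∈ ((Finset.range d).powerset.erase (Finset.range d)) := by
  rw [Finset.mem_erase, Finset.mem_powerset]
  constructor
  · intro h
    have hsub : A ⊆ Finset.range d := by
      intro i hi
      by_contra hir
      simp only [Finset.mem_range, not_lt] at hir
      have h1 : 2 ^ d ≤ 2 ^ i := Nat.pow_le_pow_right (by norm_num) hir
      have h2 : 2 ^ i ≤ colexVal A :=
        Finset.single_le_sum (f := fun j => 2 ^ j) (fun j _ => Nat.zero_le _) hi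
      omega
    refine ⟨?_, hsub⟩
    rintro rfl
    rw [colexVal_range] at h
    omega
  · rintro ⟨hne, hsub⟩
    obtain ⟨i, hir, hia⟩ : ∃ i, i ∈ Finset.range d ∧ i ∉ A := by
      by_contra hcon
      push_neg at hcon
      exact hne (Finset.Subset.antisymm hsub (fun j hj => hcon j hj))
    have := Finset.sum_lt_sum_of_subset (f := fun j : ℕ => 2 ^ j) hsub hir hia
      (Nat.pow_pos (by norm_num)) (fun j _ _ => Nat.zero_le _)
    calc colexVal A < colexVal (Finset.range d) := this
    _ = 2 ^ d - 1 := colexVal_range d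

lemma choose_sum (d : ℕ) :
    ∑ j ∈ Finset.range (d + 1), (Nat.choose (d + 1) (j + 1) : ℚ) = 2 ^ (d + 1) - 1 := by
  have h : ∑ j ∈ Finset.range (d + 2), Nat.choose (d + 1) j = 2 ^ (d + 1) :=
    Nat.sum_range_choose (d + 1)
  rw [Finset.sum_range_succ'] at h
  have h2 : ∑ j ∈ Finset.range (d + 1), Nat.choose (d + 1) (j + 1) = 2 ^ (d + 1) - 1 := by
    simp at h; omega
  rw [← Nat.cast_sum, h2, Nat.cast_sub Nat.one_le_two_pow]
  push_cast; ring

theorem initial_segment_pow_sub_one (d : ℕ) (hd : 1 ≤ d) (R : Finset (Finset ℕ))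
    (hR : ∀ A : Finset ℕ, A ∈ R ↔ colexVal A < 2 ^ d - 1) :
    R = (Finset.range d).powerset.erase (Finset.range d) ∧
    ∑ F ∈ R, (1 : ℚ) / ((F.card : ℚ) + 1) = ((2 : ℚ) ^ (d + 1) - 2) / ((d : ℚ) + 1) := by
  have hReq : R = (Finset.range d).powerset.erase (Finset.range d) := by
    ext A
    rw [hR, mem_iff]
  refine ⟨hReq, ?_⟩
  rw [hReq, Finset.sum_erase_eq_sub (Finset.mem_powerset_self _)]
  have hpow : ∑ F ∈ (Finset.range d).powerset, (1 : ℚ) / ((F.card : ℚ) + 1)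
      = (2 ^ (d + 1) - 1) / ((d : ℚ) + 1) := by
    rw [Finset.sum_powerset]
    have hcard : (Finset.range d).card = d := Finset.card_range d
    rw [hcard]
    have hstep : ∀ j ∈ Finset.range (d + 1),
        ∑ F ∈ Finset.powersetCard j (Finset.range d), (1 : ℚ) / ((F.card : ℚ) + 1)
        = (Nat.choose (d + 1) (j + 1) : ℚ) / ((d : ℚ) + 1) := by
      intro j hj
      have h1 : ∀ F ∈ Finset.powersetCard j (Finset.range d),
          (1 : ℚ) / ((F.card : ℚ) + 1) = (1 : ℚ) / ((j : ℚ) + 1) := by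
        intro F hF
        rw [(Finset.mem_powersetCard.mp hF).2]
      rw [Finset.sum_congr rfl h1, Finset.sum_const,
        Finset.card_powersetCard, hcard, nsmul_eq_mul]
      have hnat : (d + 1) * Nat.choose d j = Nat.choose (d + 1) (j + 1) * (j + 1) :=
        Nat.add_one_mul_choose_eq d j
      have hq : ((d : ℚ) + 1) * (Nat.choose d j : ℚ)
          = (Nat.choose (d + 1) (j + 1) : ℚ) * ((j : ℚ) + 1) := by exact_mod_cast hnat
      have hj1 : ((j : ℚ) + 1) ≠ 0 := by positivity
      have hd1 : ((d : ℚ) + 1) ≠ 0 := by positivity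
      field_simp
      linarith [hq]
    rw [Finset.sum_congr rfl hstep, ← Finset.sum_div, choose_sum]
  rw [hpow, Finset.card_range]
  have hd1 : ((d : ℚ) + 1) ≠ 0 := by positivity
  field_simp
  ring
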